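/- arXiv:1808.00754 — 9 statements merged into one kernel-verified Lean document; each statement's English description precedes it below -/
import Mathlib

section
/- For a single-qubit density matrix ρ = (I + r·σ)/2 with Bloch vector r ∈ ℝ³, and an orthonormal basis {|n+⟩, |n−⟩} of ℂ² corresponding to a unit vector n̂ ∈ ℝ³ on the Bloch sphere, the squared l₁-norm of coherence satisfies 4|⟨n−|ρ|n+⟩|² = |r × n̂|², the squared Euclidean norm of the cross product of r and n̂. -/
open Matrix Complex

noncomputable def pauli1 : Matrix (Fin 2) (Fin 2) ℂ := !![0, 1; 1, 0]
noncomputable def pauli2 : Matrix (Fin 2) (Fin 2) ℂ := !![0, -I; I, 0]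
noncomputable def pauli3 : Matrix (Fin 2) (Fin 2) ℂ := !![1, 0; 0, -1]

set_option maxHeartbeats 1600000 in
/-- For a qubit state ρ = (I + r·σ)/2 and the orthonormal basis {|n+⟩, |n−⟩}
associated to the Bloch unit vector n̂ = (sin α cos β, sin α sin β, cos α),
one has 4|⟨n−|ρ|n+⟩|² = |r × n̂|². -/
theorem stmt0 (r : Fin 3 → ℝ) (α β : ℝ)
    (ρ : Matrix (Fin 2) (Fin 2) ℂ)
    (hρ : ρ = (1/2 : ℂ) • (1 + (r 0 : ℂ) • pauli1 + (r 1 : ℂ) • pauli2 + (r 2 : ℂ) • pauli3))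
    (nhat : Fin 3 → ℝ)
    (hn : nhat = ![Real.sin α * Real.cos β, Real.sin α * Real.sin β, Real.cos α])
    (nplus nminus : Fin 2 → ℂ)
    (hplus : nplus = ![(Real.cos (α/2) : ℂ), Complex.exp (β * I) * (Real.sin (α/2) : ℂ)])
    (hminus : nminus = ![Complex.exp (-(β * I)) * (Real.sin (α/2) : ℂ), -(Real.cos (α/2) : ℂ)]) :
    4 * (‖(fun i => star (nminus i)) ⬝ᵥ ρ.mulVec nplus‖)^2
      = (crossProduct r nhat) ⬝ᵥ (crossProduct r nhat) := by
  subst hρ hn hplus hminus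
  rw [Complex.sq_norm]
  simp only [pauli1, pauli2, pauli3, dotProduct, mulVec, Fin.sum_univ_two, Fin.sum_univ_three,
    crossProduct, Matrix.cons_val_zero, Matrix.cons_val_one, Matrix.head_cons,
    Matrix.cons_val', Matrix.empty_val', Matrix.cons_val_fin_one,
    Matrix.smul_apply, Matrix.add_apply, Matrix.one_apply, Matrix.of_apply,
    Matrix.cons_val_two, Matrix.tail_cons]
  rw [show -(↑β * I) = ↑(-β) * I by push_cast; ring]
  rw [Complex.exp_mul_I, Complex.exp_mul_I]
  simp only [smul_eq_mul]
  simp [Complex.normSq_apply, Complex.add_re, Complex.add_im, Complex.mul_re, Complex.mul_im,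
    Real.cos_neg, Real.sin_neg, -Complex.ofReal_cos, -Complex.ofReal_sin,
    Complex.cos_ofReal_re, Complex.sin_ofReal_re, Complex.cos_ofReal_im, Complex.sin_ofReal_im]
  have hsa : Real.sin α = 2 * Real.sin (α/2) * Real.cos (α/2) := by
    rw [show α = 2 * (α/2) by ring, Real.sin_two_mul]; ring_nf
  have hca : Real.cos α = 2 * Real.cos (α/2)^2 - 1 := by
    rw [show α = 2 * (α/2) by ring, Real.cos_two_mul]; ring_nf
  rw [hsa, hca]
  have h1 : Real.sin (α/2)^2 + Real.cos (α/2)^2 = 1 := Real.sin_sq_add_cos_sq _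
  have h2 : Real.sin β^2 + Real.cos β^2 = 1 := Real.sin_sq_add_cos_sq _
  linear_combination ((1)*(Real.cos β)^4*(r 1)^2 + (1)*(Real.cos β)^4*(r 0)^2 + (2)*(Real.sin β)^2*(Real.cos β)^2*(r 1)^2 + (2)*(Real.sin β)^2*(Real.cos β)^2*(r 0)^2 + (1)*(Real.sin β)^4*(r 1)^2 + (1)*(Real.sin β)^4*(r 0)^2 + (-2)*(Real.cos (α/2))^2*(Real.cos β)^2*(r 1)^2 + (-2)*(Real.cos (α/2))^2*(Real.cos β)^2*(r 0)^2 + (-1)*(Real.cos (α/2))^2*(Real.cos β)^4*(r 1)^2 + (-1)*(Real.cos (α/2))^2*(Real.cos β)^4*(r 0)^2 + (-2)*(Real.cos (α/2))^2*(Real.sin β)^2*(r 1)^2 + (-2)*(Real.cos (α/2))^2*(Real.sin β)^2*(r 0)^2 + (-2)*(Real.cos (α/2))^2*(Real.sin β)^2*(Real.cos β)^2*(r 1)^2 + (-2)*(Real.cos (α/2))^2*(Real.sin β)^2*(Real.cos β)^2*(r 0)^2 + (-1)*(Real.cos (α/2))^2*(Real.sin β)^4*(r 1)^2 + (-1)*(Real.cos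 (α/2))^2*(Real.sin β)^4*(r 0)^2 + (4)*(Real.sin (α/2))*(Real.cos (α/2))*(Real.cos β)^3*(r 0)*(r 2) + (4)*(Real.sin (α/2))*(Real.cos (α/2))*(Real.sin β)*(Real.cos β)^2*(r 1)*(r 2) + (4)*(Real.sin (α/2))*(Real.cos (α/2))*(Real.sin β)^2*(Real.cos β)*(r 0)*(r 2) + (4)*(Real.sin (α/2))*(Real.cos (α/2))*(Real.sin β)^3*(r 1)*(r 2) + (1)*(Real.sin (α/2))^2*(Real.cos β)^4*(r 1)^2 + (1)*(Real.sin (α/2))^2*(Real.cos β)^4*(r 0)^2 + (2)*(Real.sin (α/2))^2*(Real.sin β)^2*(Real.cos β)^2*(r 1)^2 + (2)*(Real.sin (α/2))^2*(Real.sin β)^2*(Real.cos β)^2*(r 0)^2 + (1)*(Real.sin (α/2))^2*(Real.sin β)^4*(r 1)^2 + (1)*(Real.sin (α/2))^2*(Real.sin β)^4*(r 0)^2) * h1 + ((1)*(r 1)^2 + (1)*(r 0)^2 + (1)*(Real.cos β)^2*(r 1)^2 + (1)*(Real.cos β)^2*(r 0)^2 + (1)*(Real.sin β)^2*(r 1)^2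 + (1)*(Real.sin β)^2*(r 0)^2 + (-4)*(Real.cos (α/2))^2*(r 1)^2 + (-4)*(Real.cos (α/2))^2*(r 0)^2 + (-2)*(Real.cos (α/2))^2*(Real.cos β)^2*(r 1)^2 + (-2)*(Real.cos (α/2))^2*(Real.cos β)^2*(r 0)^2 + (-2)*(Real.cos (α/2))^2*(Real.sin β)^2*(r 1)^2 + (-2)*(Real.cos (α/2))^2*(Real.sin β)^2*(r 0)^2 + (3)*(Real.cos (α/2))^4*(r 1)^2 + (3)*(Real.cos (α/2))^4*(r 0)^2 + (1)*(Real.cos (α/2))^4*(Real.cos β)^2*(r 1)^2 + (1)*(Real.cos (α/2))^4*(Real.cos β)^2*(r 0)^2 + (1)*(Real.cos (α/2))^4*(Real.sin β)^2*(r 1)^2 + (1)*(Real.cos (α/2))^4*(Real.sin β)^2*(r 0)^2 + (4)*(Real.sin (α/2))*(Real.cos (α/2))*(Real.cos β)*(r 0)*(r 2) + (4)*(Real.sin (α/2))*(Real.cos (α/2))*(Real.sin β)*(r 1)*(r 2) + (-4)*(Real.sin (α/2))*(Real.cos (α/2))^3*(Real.cos β)*(r 0)*(r 2) + (-4)*(Real.sin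 (α/2))*(Real.cos (α/2))^3*(Real.sin β)*(r 1)*(r 2)) * h2
end

section
/- Let Λ be a 3×3 real matrix and t ∈ ℝ³. Then (5/2)·(3/(4π))·min over unit vectors n̂ of ∫_{‖r‖≤1} |(Λr + t) × n̂|² d³r equals M₂ + M₃, the sum of the two smallest eigenvalues of the symmetric matrix M = (ΛΛᵀ + 5 t tᵀ)/2. -/
open Matrix MeasureTheory Metric Set

noncomputable abbrev E3 := EuclideanSpace ℝ (Fin 3)

lemma gamma52 : Real.Gamma ((3:ℝ) / 2 + 1) = 3/4 * Real.sqrt Real.pi := by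
  rw [Real.Gamma_add_one (by norm_num), show (3/2:ℝ) = 1/2 + 1 by norm_num,
    Real.Gamma_add_one (by norm_num), Real.Gamma_one_half_eq]
  ring

lemma volE3_ball : volume (ball (0:E3) 1) = ENNReal.ofReal (4 * Real.pi / 3) := by
  rw [EuclideanSpace.volume_ball (Fin 3) 0 1]
  have hπ := Real.pi_pos
  have hs : Real.sqrt Real.pi > 0 := Real.sqrt_pos.2 hπ
  have h3 : (Fintype.card (Fin 3) : ℝ) = 3 := by simp
  simp only [Fintype.card_fin]
  rw [show ((3:ℕ):ℝ)/2 + 1 = (3:ℝ)/2 + 1 by norm_num, gamma52]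
  rw [ENNReal.ofReal_one, one_pow, one_mul]
  congr 1
  have h1 : Real.sqrt Real.pi ^ 3 = Real.pi * Real.sqrt Real.pi := by
    rw [pow_succ, pow_two, Real.mul_self_sqrt hπ.le]
  rw [h1]
  field_simp

lemma volE3_closedBall : volume (closedBall (0:E3) 1) = ENNReal.ofReal (4 * Real.pi / 3) := by
  rw [Measure.addHaar_closedBall_eq_addHaar_ball, volE3_ball]

lemma intB_normsq : ∫ x in closedBall (0:E3) 1, ‖x‖^2 = 4 * Real.pi / 5 := by
  have key := integral_fun_norm_addHaar (volume : Measure E3)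
      (Set.indicator (Set.Iic (1:ℝ)) (fun y => y^2))
  rw [finrank_euclideanSpace, Fintype.card_fin] at key
  have lhs_eq : (fun x : E3 => Set.indicator (Set.Iic (1:ℝ)) (fun y => y^2) ‖x‖)
      = Set.indicator (closedBall (0:E3) 1) (fun x => ‖x‖^2) := by
    funext x
    by_cases h : ‖x‖ ≤ 1
    · rw [Set.indicator_of_mem (by exact h) , Set.indicator_of_mem (by simpa [dist_zero_right] using h)]
    · rw [Set.indicator_of_notMem (by exact h), Set.indicator_of_notMem (by simpa [dist_zero_right] using h)]
  rw [lhs_eq, integral_indicator (measurableSet_closedBall)] at key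
  have inner_eq : (fun y : ℝ => y ^ (3-1) • Set.indicator (Set.Iic (1:ℝ)) (fun y => y^2) y)
      = Set.indicator (Set.Iic (1:ℝ)) (fun y => y^4) := by
    funext y
    by_cases h : y ∈ Set.Iic (1:ℝ)
    · rw [Set.indicator_of_mem h, Set.indicator_of_mem h]; simp; ring
    · rw [Set.indicator_of_notMem h, Set.indicator_of_notMem h]; simp
  rw [inner_eq, setIntegral_indicator measurableSet_Iic, Set.Ioi_inter_Iic,
    ← intervalIntegral.integral_of_le (by norm_num : (0:ℝ) ≤ 1),
    integral_pow, measureReal_def, volE3_ball] at key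
  rw [key, ENNReal.toReal_ofReal (by positivity)]
  norm_num
  ring

/-- flip of coordinate k as a linear isometry equiv of E3 -/
noncomputable def flipLI (k : Fin 3) : E3 ≃ₗᵢ[ℝ] E3 :=
{ toFun := fun x => WithLp.toLp 2 (fun j => if j = k then -(x j) else x j : Fin 3 → ℝ)
  invFun := fun x => WithLp.toLp 2 (fun j => if j = k then -(x j) else x j : Fin 3 → ℝ)
  left_inv := by intro x; ext j; by_cases h : j = k <;> simp [h]
  right_inv := by intro x; ext j; by_cases h : j = k <;> simp [h]
  map_add' := by intro x y; ext j; by_cases h : j = k <;> simp [h] <;> ring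
  map_smul' := by intro c x; ext j; by_cases h : j = k <;> simp [h] <;> ring
  norm_map' := by
    intro x
    rw [EuclideanSpace.norm_eq, EuclideanSpace.norm_eq]
    congr 1
    apply Finset.sum_congr rfl
    intro j _
    by_cases h : j = k <;> simp [h] }

lemma flipLI_apply (k : Fin 3) (x : E3) (j : Fin 3) :
    flipLI k x j = if j = k then -(x j) else x j := rfl

lemma flipLI_preimage (k : Fin 3) :
    (flipLI k) ⁻¹' (closedBall (0:E3) 1) = closedBall (0:E3) 1 := by
  have := (flipLI k).preimage_closedBall 0 1
  simpa using this

/-- generic symmetry: integrate g ∘ f over the ball -/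
lemma int_comp_li (f : E3 ≃ₗᵢ[ℝ] E3) (g : E3 → ℝ) :
    ∫ x in closedBall (0:E3) 1, g (f x) = ∫ x in closedBall (0:E3) 1, g x := by
  have h := (f.measurePreserving).setIntegral_preimage_emb
    (f.toHomeomorph.measurableEmbedding) g (closedBall (0:E3) 1)
  rw [show (⇑f ⁻¹' closedBall 0 1) = closedBall (0:E3) 1 by simpa using f.preimage_closedBall 0 1] at h
  exact h

lemma intgB {g : E3 → ℝ} (hg : Continuous g) :
    IntegrableOn g (closedBall (0:E3) 1) :=
  ContinuousOn.integrableOn_compact (isCompact_closedBall 0 1) hg.continuousOn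

lemma mom1 (i : Fin 3) : ∫ x in closedBall (0:E3) 1, x i = 0 := by
  have h := int_comp_li (flipLI i) (fun x => x i)
  simp only [flipLI_apply, if_pos rfl, if_true] at h
  have hneg : ∫ x in closedBall (0:E3) 1, -(x i) = - ∫ x in closedBall (0:E3) 1, x i :=
    integral_neg _
  rw [hneg] at h
  linarith

lemma mom2_off {i j : Fin 3} (hij : i ≠ j) :
    ∫ x in closedBall (0:E3) 1, x i * x j = 0 := by
  have h := int_comp_li (flipLI i) (fun x => x i * x j)
  simp only [flipLI_apply, if_pos rfl, if_true, if_neg (Ne.symm hij)] at h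
  have : (fun x : E3 => -(x i) * x j) = fun x : E3 => -(x i * x j) := by funext x; ring
  rw [this, integral_neg] at h
  linarith

lemma mom2_diag (i : Fin 3) :
    ∫ x in closedBall (0:E3) 1, (x i)^2 = ∫ x in closedBall (0:E3) 1, (x 0)^2 := by
  have h := int_comp_li (LinearIsometryEquiv.piLpCongrLeft 2 ℝ ℝ (Equiv.swap (0:Fin 3) i))
    (fun x => (x 0)^2)
  have hx : ∀ x : E3,
      ((LinearIsometryEquiv.piLpCongrLeft 2 ℝ ℝ (Equiv.swap (0:Fin 3) i)) x) 0 = x i := by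
    intro x
    simp only [LinearIsometryEquiv.piLpCongrLeft_apply, Equiv.piCongrLeft'_apply, Equiv.symm_swap]
    rw [Equiv.swap_apply_left]
  simp only [hx] at h
  exact h

lemma normsq_eq (x : E3) : ‖x‖^2 = ∑ i, (x i)^2 := by
  rw [EuclideanSpace.norm_eq, Real.sq_sqrt (by positivity)]
  simp [sq_abs]

lemma mom2 (k l : Fin 3) : ∫ x in closedBall (0:E3) 1, x k * x l
    = if k = l then 4 * Real.pi / 15 else 0 := by
  by_cases h : k = l
  · subst h
    rw [if_pos rfl]
    have h0 : ∫ x in closedBall (0:E3) 1, (x 0)^2 = 4 * Real.pi / 15 := by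
      have hsum : ∫ x in closedBall (0:E3) 1, (∑ j, (x j)^2)
          = ∑ j, ∫ x in closedBall (0:E3) 1, (x j)^2 :=
        integral_finset_sum _ (fun j _ => intgB ((PiLp.continuous_apply 2 (fun _ : Fin 3 => ℝ) j).pow 2))
      have hnorm : ∫ x in closedBall (0:E3) 1, (∑ j, (x j)^2) = 4 * Real.pi / 5 := by
        rw [← intB_normsq]
        exact setIntegral_congr_fun measurableSet_closedBall (fun x _ => (normsq_eq x).symm)
      rw [hnorm, Fin.sum_univ_three, mom2_diag 1, mom2_diag 2] at hsum
      linarith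
    have := mom2_diag k
    rw [h0] at this
    calc ∫ x in closedBall (0:E3) 1, x k * x k
        = ∫ x in closedBall (0:E3) 1, (x k)^2 := by
          apply setIntegral_congr_fun measurableSet_closedBall; intro x _; ring
      _ = 4 * Real.pi / 15 := this
  · rw [if_neg h]; exact mom2_off h

lemma integral_quad (C : Fin 3 → Fin 3 → ℝ) (D : Fin 3 → ℝ) (e : ℝ) :
    ∫ x in closedBall (0:E3) 1,
      ((∑ k, ∑ l, C k l * (x k * x l)) + ((∑ k, D k * x k) + e))
    = (∑ k, C k k) * (4 * Real.pi / 15) + e * (4 * Real.pi / 3) := by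
  have hkl : ∀ k l : Fin 3, IntegrableOn (fun x : E3 => C k l * (x k * x l))
      (closedBall (0:E3) 1) :=
    fun k l => intgB (continuous_const.mul ((PiLp.continuous_apply 2 (fun _ : Fin 3 => ℝ) k).mul (PiLp.continuous_apply 2 (fun _ : Fin 3 => ℝ) l)))
  have hk : ∀ k : Fin 3, IntegrableOn (fun x : E3 => D k * x k) (closedBall (0:E3) 1) :=
    fun k => intgB (continuous_const.mul (PiLp.continuous_apply 2 (fun _ : Fin 3 => ℝ) k))
  have hQ : IntegrableOn (fun x : E3 => ∑ k, ∑ l, C k l * (x k * x l))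
      (closedBall (0:E3) 1) := by
    apply integrable_finset_sum
    intro k _
    exact integrable_finset_sum _ (fun l _ => hkl k l)
  have hL : IntegrableOn (fun x : E3 => (∑ k, D k * x k) + e) (closedBall (0:E3) 1) := by
    apply Integrable.add
    · exact integrable_finset_sum _ (fun k _ => hk k)
    · exact integrableOn_const (by
        rw [volE3_closedBall]; exact ENNReal.ofReal_ne_top)
  rw [integral_add hQ hL]
  have e1 : ∫ x in closedBall (0:E3) 1, (∑ k, ∑ l, C k l * (x k * x l))
      = ∑ k, C k k * (4 * Real.pi / 15) := by
    rw [integral_finset_sum _ (fun k _ => integrable_finset_sum _ (fun l _ => hkl k l))]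
    apply Finset.sum_congr rfl
    intro k _
    rw [integral_finset_sum _ (fun l _ => hkl k l)]
    have : ∀ l : Fin 3, ∫ x in closedBall (0:E3) 1, C k l * (x k * x l)
        = C k l * (if k = l then 4 * Real.pi / 15 else 0) := by
      intro l; rw [integral_const_mul, mom2]
    simp only [this, mul_ite, mul_zero]
    simp [Finset.sum_ite_eq]
  have e2 : ∫ x in closedBall (0:E3) 1, ((∑ k, D k * x k) + e)
      = e * (4 * Real.pi / 3) := by
    rw [integral_add (integrable_finset_sum _ (fun k _ => hk k))
      (integrableOn_const (by rw [volE3_closedBall]; exact ENNReal.ofReal_ne_top))]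
    rw [integral_finset_sum _ (fun k _ => hk k)]
    have : ∀ k : Fin 3, ∫ x in closedBall (0:E3) 1, D k * x k = 0 := by
      intro k; rw [integral_const_mul, mom1, mul_zero]
    simp only [this, Finset.sum_const_zero, zero_add]
    rw [setIntegral_const, measureReal_def, volE3_closedBall, ENNReal.toReal_ofReal (by positivity)]
    rw [smul_eq_mul, mul_comm]
  rw [e1, e2]
  rw [← Finset.sum_mul]


lemma transfer (f : (Fin 3 → ℝ) → ℝ) :
    ∫ r in {r : Fin 3 → ℝ | r ⬝ᵥ r ≤ 1}, f r
      = ∫ x in closedBall (0:E3) 1, f (((MeasurableEquiv.toLp 2 (Fin 3 → ℝ)).symm) x) := by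
  have hset : (⇑((MeasurableEquiv.toLp 2 (Fin 3 → ℝ)).symm)) ⁻¹' {r : Fin 3 → ℝ | r ⬝ᵥ r ≤ 1}
      = closedBall (0:E3) 1 := by
    ext x
    simp only [mem_preimage, mem_setOf_eq, mem_closedBall, dist_zero_right]
    have h1 : ((MeasurableEquiv.toLp 2 (Fin 3 → ℝ)).symm) x ⬝ᵥ ((MeasurableEquiv.toLp 2 (Fin 3 → ℝ)).symm) x
        = ‖x‖^2 := by
      rw [normsq_eq]
      show ∑ i, x i * x i = _
      apply Finset.sum_congr rfl
      intro i _
      ring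
    rw [h1]
    exact pow_le_one_iff_of_nonneg (norm_nonneg x) two_ne_zero
  rw [← (EuclideanSpace.volume_preserving_symm_measurableEquiv_toLp (Fin 3)).setIntegral_preimage_emb
    (MeasurableEquiv.measurableEmbedding _) f {r : Fin 3 → ℝ | r ⬝ᵥ r ≤ 1}, hset]

section key
variable (Λ : Matrix (Fin 3) (Fin 3) ℝ) (t n : Fin 3 → ℝ)

/-- quadratic coefficient -/
def Cq (k l : Fin 3) : ℝ :=
  (∑ i, Λ i k * Λ i l) - (∑ i, n i * Λ i k) * (∑ i, n i * Λ i l)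
/-- linear coefficient -/
def Dq (k : Fin 3) : ℝ :=
  2*((∑ i, t i * Λ i k) - (t ⬝ᵥ n) * (∑ i, n i * Λ i k))
/-- constant coefficient -/
def Eq0 : ℝ := t ⬝ᵥ t - (t ⬝ᵥ n)^2

lemma key (hn : n ⬝ᵥ n = 1) (r : Fin 3 → ℝ) :
    (crossProduct (Λ.mulVec r + t) n) ⬝ᵥ (crossProduct (Λ.mulVec r + t) n)
    = (∑ k, ∑ l, Cq Λ n k l * (r k * r l)) + ((∑ k, Dq Λ t n k * r k) + Eq0 t n) := by
  have hn' : n 0 * n 0 + n 1 * n 1 + n 2 * n 2 = 1 := by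
    simpa [dotProduct, Fin.sum_univ_three] using hn
  simp only [Cq, Dq, Eq0, cross_apply, dotProduct, Matrix.mulVec, Fin.sum_univ_three,
    Pi.add_apply, Matrix.cons_val_zero, Matrix.cons_val_one, Matrix.head_cons,
    Matrix.cons_val_two, Matrix.tail_cons]
  linear_combination (((Λ 0 0 * r 0 + Λ 0 1 * r 1 + Λ 0 2 * r 2 + t 0)^2
    + (Λ 1 0 * r 0 + Λ 1 1 * r 1 + Λ 1 2 * r 2 + t 1)^2
    + (Λ 2 0 * r 0 + Λ 2 1 * r 1 + Λ 2 2 * r 2 + t 2)^2)) * hn'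
end key

section LA
variable (O : Matrix (Fin 3) (Fin 3) ℝ) (μ : Fin 3 → ℝ) (n : Fin 3 → ℝ)

lemma dot_transpose_mulVec (w : Fin 3 → ℝ) :
    n ⬝ᵥ Oᵀ *ᵥ w = (O *ᵥ n) ⬝ᵥ w := by
  rw [Matrix.dotProduct_mulVec, Matrix.vecMul_transpose]

lemma quad_diag : n ⬝ᵥ (Oᵀ * Matrix.diagonal μ * O) *ᵥ n = ∑ i, μ i * ((O *ᵥ n) i)^2 := by
  rw [← Matrix.mulVec_mulVec, ← Matrix.mulVec_mulVec, dot_transpose_mulVec]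
  simp only [dotProduct, Matrix.mulVec_diagonal]
  apply Finset.sum_congr rfl
  intro i _
  ring

lemma mulVec_norm (hO : Oᵀ * O = 1) : (O *ᵥ n) ⬝ᵥ (O *ᵥ n) = n ⬝ᵥ n := by
  rw [Matrix.dotProduct_mulVec]
  have : (O *ᵥ n) ᵥ* O = n := by
    rw [← Matrix.transpose_transpose O, Matrix.vecMul_transpose, Matrix.transpose_transpose,
      Matrix.mulVec_mulVec, hO, Matrix.one_mulVec]
  rw [this]

lemma trace_diag (hO : Oᵀ * O = 1) :
    (Oᵀ * Matrix.diagonal μ * O).trace = μ 0 + μ 1 + μ 2 := by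
  rw [Matrix.trace_mul_cycle, mul_eq_one_comm.mp hO, Matrix.one_mul,
    Matrix.trace_diagonal, Fin.sum_univ_three]

lemma row_unit (hO : Oᵀ * O = 1) :
    (fun k => O 0 k) ⬝ᵥ (fun k => O 0 k) = 1 := by
  have h' : O * Oᵀ = 1 := mul_eq_one_comm.mp hO
  have := congrArg (fun A => A 0 0) h'
  simpa [Matrix.mul_apply, dotProduct] using this

lemma mulVec_row (hO : Oᵀ * O = 1) (j : Fin 3) :
    (O *ᵥ (fun k => O 0 k)) j = if j = 0 then 1 else 0 := by
  have h' : O * Oᵀ = 1 := mul_eq_one_comm.mp hO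
  have := congrArg (fun A => A j 0) h'
  simp only [Matrix.mul_apply, Matrix.transpose_apply] at this
  simp only [Matrix.mulVec, dotProduct]
  rw [this]
  by_cases h : j = 0 <;> simp [h, Matrix.one_apply]
end LA

lemma value_scalar (Λ : Matrix (Fin 3) (Fin 3) ℝ) (t n : Fin 3 → ℝ) :
    (1/2) * (∑ k, Cq Λ n k k) + (5/2) * Eq0 t n
    = ((1/2 : ℝ) • (Λ * Λᵀ + (5 : ℝ) • vecMulVec t t)).trace
      - n ⬝ᵥ ((1/2 : ℝ) • (Λ * Λᵀ + (5 : ℝ) • vecMulVec t t)) *ᵥ n := by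
  simp only [Cq, Eq0, Matrix.trace, Matrix.diag_apply, Matrix.smul_apply, Matrix.add_apply,
    Matrix.mul_apply, Matrix.transpose_apply, Matrix.vecMulVec_apply, Matrix.mulVec, dotProduct,
    smul_eq_mul, Fin.sum_univ_three, Pi.add_apply]
  ring

lemma main_value (Λ : Matrix (Fin 3) (Fin 3) ℝ) (t n : Fin 3 → ℝ) (hn : n ⬝ᵥ n = 1) :
    (5/2) * (3/(4*Real.pi)) * (∫ r in {r : Fin 3 → ℝ | r ⬝ᵥ r ≤ 1},
        (crossProduct (Λ.mulVec r + t) n) ⬝ᵥ (crossProduct (Λ.mulVec r + t) n))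
    = ((1/2 : ℝ) • (Λ * Λᵀ + (5 : ℝ) • vecMulVec t t)).trace
      - n ⬝ᵥ ((1/2 : ℝ) • (Λ * Λᵀ + (5 : ℝ) • vecMulVec t t)) *ᵥ n := by
  rw [transfer]
  have h2 : (fun x : E3 => (crossProduct (Λ.mulVec (((MeasurableEquiv.toLp 2 (Fin 3 → ℝ)).symm) x) + t) n)
        ⬝ᵥ (crossProduct (Λ.mulVec (((MeasurableEquiv.toLp 2 (Fin 3 → ℝ)).symm) x) + t) n))
      = (fun x : E3 => (∑ k, ∑ l, Cq Λ n k l * (x k * x l))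
          + ((∑ k, Dq Λ t n k * x k) + Eq0 t n)) := by
    funext x
    exact key Λ t n hn (((MeasurableEquiv.toLp 2 (Fin 3 → ℝ)).symm) x)
  rw [show (∫ x in closedBall (0:E3) 1,
      (crossProduct (Λ.mulVec (((MeasurableEquiv.toLp 2 (Fin 3 → ℝ)).symm) x) + t) n)
        ⬝ᵥ (crossProduct (Λ.mulVec (((MeasurableEquiv.toLp 2 (Fin 3 → ℝ)).symm) x) + t) n))
    = ∫ x in closedBall (0:E3) 1, ((∑ k, ∑ l, Cq Λ n k l * (x k * x l))
          + ((∑ k, Dq Λ t n k * x k) + Eq0 t n)) from by rw [h2]]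
  rw [integral_quad]
  rw [← value_scalar]
  have hπ : Real.pi ≠ 0 := Real.pi_ne_zero
  field_simp
  ring

open Matrix MeasureTheory

/-- `μ` lists the eigenvalues of the real symmetric 3×3 matrix `M` in nonincreasing
order, via an orthogonal diagonalization `M = Oᵀ (diag μ) O`. -/
def EigOrdered (M : Matrix (Fin 3) (Fin 3) ℝ) (μ : Fin 3 → ℝ) : Prop :=
  (∃ O : Matrix (Fin 3) (Fin 3) ℝ, Oᵀ * O = 1 ∧ M = Oᵀ * Matrix.diagonal μ * O) ∧
  μ 1 ≤ μ 0 ∧ μ 2 ≤ μ 1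

/-- The quantumness `(5/2)(3/(4π)) min_{n̂} ∫_{‖r‖≤1} |(Λr + t) × n̂|² d³r` of a
qubit channel with affine parameters `(Λ, t)` equals the sum `M₂ + M₃` of the two
smallest eigenvalues of `M = (ΛΛᵀ + 5ttᵀ)/2`. -/
theorem stmt4 (Λ : Matrix (Fin 3) (Fin 3) ℝ) (t : Fin 3 → ℝ) (μ : Fin 3 → ℝ)
    (hμ : EigOrdered ((1/2 : ℝ) • (Λ * Λᵀ + (5 : ℝ) • vecMulVec t t)) μ) :
    IsLeast {x : ℝ | ∃ n : Fin 3 → ℝ, n ⬝ᵥ n = 1 ∧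
        x = (5/2) * (3/(4*Real.pi)) * ∫ r in {r : Fin 3 → ℝ | r ⬝ᵥ r ≤ 1},
              (crossProduct (Λ.mulVec r + t) n) ⬝ᵥ (crossProduct (Λ.mulVec r + t) n)}
      (μ 1 + μ 2) := by
  obtain ⟨⟨O, hO, hM⟩, h10, h21⟩ := hμ
  set M := (1/2 : ℝ) • (Λ * Λᵀ + (5 : ℝ) • vecMulVec t t) with hMdef
  have htr : M.trace = μ 0 + μ 1 + μ 2 := by rw [hM]; exact trace_diag O μ hO
  have hq : ∀ n : Fin 3 → ℝ, n ⬝ᵥ M *ᵥ n = ∑ i, μ i * ((O *ᵥ n) i)^2 := by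
    intro n; rw [hM]; exact quad_diag O μ n
  constructor
  · refine ⟨fun k => O 0 k, row_unit O hO, ?_⟩
    rw [main_value Λ t _ (row_unit O hO), htr, hq]
    have hm := mulVec_row O hO
    rw [Fin.sum_univ_three, hm 0, hm 1, hm 2, if_pos rfl,
      if_neg (by decide : (1:Fin 3) ≠ 0), if_neg (by decide : (2:Fin 3) ≠ 0)]
    ring
  · rintro x ⟨n, hn, rfl⟩
    rw [main_value Λ t n hn, htr, hq]
    have hnorm : ∑ i, ((O *ᵥ n) i)^2 = 1 := by
      have := mulVec_norm O n hO
      rw [hn] at this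
      rw [← this]
      simp only [dotProduct]
      exact Finset.sum_congr rfl (fun i _ => sq ((O *ᵥ n) i))
    rw [Fin.sum_univ_three] at hnorm ⊢
    have expand : μ 0 * ((O *ᵥ n) 0^2 + ((O *ᵥ n) 1^2 + ((O *ᵥ n) 2^2))) = μ 0 := by
      rw [show (O *ᵥ n) 0^2 + ((O *ᵥ n) 1^2 + ((O *ᵥ n) 2^2)) = (O *ᵥ n) 0^2 + (O *ᵥ n) 1^2 + (O *ᵥ n) 2^2 by ring, hnorm, mul_one]
    nlinarith [mul_nonneg (sub_nonneg.2 h10) (sq_nonneg ((O *ᵥ n) 1)),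
      mul_nonneg (sub_nonneg.2 (h21.trans h10)) (sq_nonneg ((O *ᵥ n) 2)), expand]
end

section
/- Let Λ be a 3×3 real matrix whose singular values are all at most 1, let t ∈ ℝ³, and let M = (ΛΛᵀ + 5 t tᵀ)/2 have eigenvalues M₁ ≥ M₂ ≥ M₃. Then M₂ + M₃ ≤ 1. -/
open Matrix

open Module in
lemma exists_pair (t : Fin 3 → ℝ) :
    ∃ a b : Fin 3 → ℝ, a ⬝ᵥ a = 1 ∧ b ⬝ᵥ b = 1 ∧ a ⬝ᵥ b = 0 ∧ t ⬝ᵥ a = 0 ∧ t ⬝ᵥ b = 0 := by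
  set E := EuclideanSpace ℝ (Fin 3)
  set t' : E := WithLp.toLp 2 t with ht'
  set K : Submodule ℝ E := (Submodule.span ℝ {t'})ᗮ with hK
  have hspan : finrank ℝ (Submodule.span ℝ {t'}) ≤ 1 := by
    rcases eq_or_ne t' 0 with h | h
    · rw [h, Submodule.span_zero_singleton]; simp
    · exact le_of_eq (finrank_span_singleton h)
  have hsum := Submodule.finrank_add_finrank_orthogonal (𝕜 := ℝ) (Submodule.span ℝ {t'})
  have hE : finrank ℝ E = 3 := by simp [E]
  have h2 : 2 ≤ finrank ℝ K := by rw [hK]; omega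
  set ob := stdOrthonormalBasis ℝ K with hob
  have hon := ob.orthonormal
  set i0 : Fin (finrank ℝ K) := ⟨0, by omega⟩
  set i1 : Fin (finrank ℝ K) := ⟨1, by omega⟩
  set a : E := (ob i0 : E)
  set b : E := (ob i1 : E)
  have haK : a ∈ K := (ob i0).2
  have hbK : b ∈ K := (ob i1).2
  have hta : (inner ℝ t' a : ℝ) = 0 := by
    exact (Submodule.mem_orthogonal _ _).1 haK t' (Submodule.mem_span_singleton_self t')
  have htb : (inner ℝ t' b : ℝ) = 0 := by
    exact (Submodule.mem_orthogonal _ _).1 hbK t' (Submodule.mem_span_singleton_self t')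
  have haa : (inner ℝ a a : ℝ) = 1 := by
    have := hon.1 i0
    have : (inner ℝ (ob i0) (ob i0) : ℝ) = 1 := by
      rw [real_inner_self_eq_norm_sq, this]; norm_num
    rw [Submodule.coe_inner] at this; exact this
  have hbb : (inner ℝ b b : ℝ) = 1 := by
    have := hon.1 i1
    have : (inner ℝ (ob i1) (ob i1) : ℝ) = 1 := by
      rw [real_inner_self_eq_norm_sq, this]; norm_num
    rw [Submodule.coe_inner] at this; exact this
  have hab : (inner ℝ a b : ℝ) = 0 := by
    have : (inner ℝ (ob i0) (ob i1) : ℝ) = 0 := hon.2 (by simp [i0, i1])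
    rw [Submodule.coe_inner] at this; exact this
  have key : ∀ x y : E, (inner ℝ x y : ℝ) = (x : Fin 3 → ℝ) ⬝ᵥ (y : Fin 3 → ℝ) := by
    intro x y
    rw [PiLp.inner_apply]
    simp [RCLike.inner_apply, dotProduct, mul_comm]
  exact ⟨WithLp.ofLp a, WithLp.ofLp b, (key a a).symm.trans haa, (key b b).symm.trans hbb,
    (key a b).symm.trans hab, (key t' a).symm.trans hta, (key t' b).symm.trans htb⟩

lemma bessel3 (a b v : Fin 3 → ℝ) (ha : a ⬝ᵥ a = 1) (hb : b ⬝ᵥ b = 1)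
    (hab : a ⬝ᵥ b = 0) (hv : v ⬝ᵥ v = 1) :
    (v ⬝ᵥ a) * (v ⬝ᵥ a) + (v ⬝ᵥ b) * (v ⬝ᵥ b) ≤ 1 := by
  set d : Fin 3 → ℝ := v - (v ⬝ᵥ a) • a - (v ⬝ᵥ b) • b with hd
  have hnn : 0 ≤ d ⬝ᵥ d := Finset.sum_nonneg fun i _ => mul_self_nonneg _
  have hexp : d ⬝ᵥ d = 1 - (v ⬝ᵥ a) * (v ⬝ᵥ a) - (v ⬝ᵥ b) * (v ⬝ᵥ b) := by
    rw [hd]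
    simp only [sub_dotProduct, dotProduct_sub, smul_dotProduct, dotProduct_smul, smul_eq_mul]
    rw [dotProduct_comm a v, dotProduct_comm b v, dotProduct_comm b a]
    rw [ha, hb, hab, hv]
    ring
  linarith [hexp ▸ hnn]

lemma vecMulVec_mv (t a : Fin 3 → ℝ) (h : t ⬝ᵥ a = 0) : (vecMulVec t t) *ᵥ a = 0 := by
  funext j
  simp only [mulVec, vecMulVec_apply, dotProduct, Pi.zero_apply]
  have : ∑ x : Fin 3, t j * t x * a x = t j * ∑ x : Fin 3, t x * a x := by
    rw [Finset.mul_sum]; exact Finset.sum_congr rfl fun i _ => by ring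
  rw [this, show (∑ x : Fin 3, t x * a x) = t ⬝ᵥ a from rfl, h, mul_zero]

/-- If all singular values of `Λ` are at most 1 (i.e. `ΛΛᵀ ≤ I` in the Loewner
order), then the sum of the two smallest eigenvalues of `M = (ΛΛᵀ + 5ttᵀ)/2`
is at most 1. -/
theorem stmt5 (Λ : Matrix (Fin 3) (Fin 3) ℝ) (t : Fin 3 → ℝ)
    (hsing : ∀ x : Fin 3 → ℝ, x ⬝ᵥ (Λ * Λᵀ).mulVec x ≤ x ⬝ᵥ x)
    (μ : Fin 3 → ℝ)
    (hμ : EigOrdered ((1/2 : ℝ) • (Λ * Λᵀ + (5 : ℝ) • vecMulVec t t)) μ) :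
    μ 1 + μ 2 ≤ 1 := by
  obtain ⟨⟨O, hO, hM⟩, h01, h12⟩ := hμ
  obtain ⟨a, b, haa, hbb, hab, hta, htb⟩ := exists_pair t
  have hOOT : O * Oᵀ = 1 := mul_eq_one_comm.mp hO
  set M : Matrix (Fin 3) (Fin 3) ℝ := (1/2 : ℝ) • (Λ * Λᵀ + (5 : ℝ) • vecMulVec t t) with hMdef
  set α : Fin 3 → ℝ := O *ᵥ a with hα
  set β : Fin 3 → ℝ := O *ᵥ b with hβ
  have quad : ∀ x : Fin 3 → ℝ,
      x ⬝ᵥ M *ᵥ x = ∑ i, μ i * ((O *ᵥ x) i * (O *ᵥ x) i) := by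
    intro x
    rw [hM, Matrix.mul_assoc, ← mulVec_mulVec, dotProduct_mulVec, vecMul_transpose,
      ← mulVec_mulVec]
    simp only [dotProduct, mulVec_diagonal]
    exact Finset.sum_congr rfl fun i _ => by ring
  have hq : ∀ x : Fin 3 → ℝ, t ⬝ᵥ x = 0 → x ⬝ᵥ x = 1 → x ⬝ᵥ M *ᵥ x ≤ 1/2 := by
    intro x htx hxx
    rw [hMdef, smul_mulVec, dotProduct_smul, add_mulVec, smul_mulVec,
      vecMulVec_mv t x htx, smul_zero, add_zero, smul_eq_mul]
    have := hsing x
    rw [hxx] at this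
    linarith
  have hnorm : ∀ x : Fin 3 → ℝ, (O *ᵥ x) ⬝ᵥ (O *ᵥ x) = x ⬝ᵥ x := by
    intro x
    have h1 : x ⬝ᵥ ((Oᵀ * O) *ᵥ x) = (O *ᵥ x) ⬝ᵥ (O *ᵥ x) := by
      rw [← mulVec_mulVec, dotProduct_mulVec, vecMul_transpose]
    rw [hO, one_mulVec] at h1
    exact h1.symm
  have hcoord : ∀ i : Fin 3, α i * α i + β i * β i ≤ 1 := by
    intro i
    set v : Fin 3 → ℝ := fun j => O i j with hv
    have hvv : v ⬝ᵥ v = 1 := by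
      have : (O * Oᵀ) i i = 1 := by rw [hOOT]; simp
      rw [← this]
      simp [Matrix.mul_apply, dotProduct, hv]
    have hva : v ⬝ᵥ a = α i := rfl
    have hvb : v ⬝ᵥ b = β i := rfl
    have := bessel3 a b v haa hbb hab hvv
    rw [hva, hvb] at this
    exact this
  have hA : ∑ i, μ i * (α i * α i) ≤ 1/2 := by
    rw [← quad a]; exact hq a hta haa
  have hB : ∑ i, μ i * (β i * β i) ≤ 1/2 := by
    rw [← quad b]; exact hq b htb hbb
  have hSa : α 0 * α 0 + α 1 * α 1 + α 2 * α 2 = 1 := by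
    have := hnorm a; rw [haa] at this
    simpa [dotProduct, Fin.sum_univ_three] using this
  have hSb : β 0 * β 0 + β 1 * β 1 + β 2 * β 2 = 1 := by
    have := hnorm b; rw [hbb] at this
    simpa [dotProduct, Fin.sum_univ_three] using this
  rw [Fin.sum_univ_three] at hA hB
  have hc1 := hcoord 1
  have hc2 := hcoord 2
  nlinarith [mul_nonneg (sub_nonneg.mpr h01) (sub_nonneg.mpr hc1),
    mul_nonneg (sub_nonneg.mpr (h12.trans h01)) (sub_nonneg.mpr hc2)]
end

section
/- Let Λ be a 3×3 real matrix whose singular values are all at most 1, and assume additionally that if some singular value of Λ equals 1 then t = 0 is forced (i.e., ‖Λr + t‖ ≤ 1 for all ‖r‖ ≤ 1). If the sum of the two smallest eigenvalues of M = (ΛΛᵀ + 5 t tᵀ)/2 equals 1, then t = 0 and ΛΛᵀ = I₃. -/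
open Matrix

lemma cs_dot (x y : Fin 3 → ℝ) : (x ⬝ᵥ y) ^ 2 ≤ (x ⬝ᵥ x) * (y ⬝ᵥ y) := by
  simpa [dotProduct, sq] using Finset.sum_mul_sq_le_sq_mul_sq Finset.univ x y

lemma dot_nonneg' (x : Fin 3 → ℝ) : 0 ≤ x ⬝ᵥ x :=
  Finset.sum_nonneg fun _ _ => mul_self_nonneg _

/-- Contraction of the unit ball gives ‖Λᵀ‖-type bound: xAᵀAx ≤ (1-‖t‖²)‖x‖². -/
lemma keyA (Λ : Matrix (Fin 3) (Fin 3) ℝ) (t : Fin 3 → ℝ)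
    (hcontr : ∀ r : Fin 3 → ℝ, r ⬝ᵥ r ≤ 1 →
      (Λ.mulVec r + t) ⬝ᵥ (Λ.mulVec r + t) ≤ 1) :
    ∀ x : Fin 3 → ℝ, x ⬝ᵥ (Λ * Λᵀ).mulVec x ≤ (1 - t ⬝ᵥ t) * (x ⬝ᵥ x) := by
  have hT1 : t ⬝ᵥ t ≤ 1 := by simpa using hcontr 0 (by simp)
  intro x
  set w := Λᵀ.mulVec x with hw
  have hxw : ∀ v : Fin 3 → ℝ, x ⬝ᵥ Λ.mulVec v = w ⬝ᵥ v := by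
    intro v
    rw [dotProduct_mulVec, hw, mulVec_transpose]
  have hAx : x ⬝ᵥ (Λ * Λᵀ).mulVec x = w ⬝ᵥ w := by
    rw [← mulVec_mulVec, hxw]
  set W := w ⬝ᵥ w with hWdef
  have hW0 : 0 ≤ W := dot_nonneg' w
  rcases eq_or_lt_of_le hW0 with hW | hW
  · rw [hAx, ← hW]
    exact mul_nonneg (by linarith) (dot_nonneg' x)
  · set c : ℝ := (Real.sqrt W)⁻¹ with hc
    have hsq : c ^ 2 = W⁻¹ := by
      rw [hc, ← Real.sqrt_inv]
      exact Real.sq_sqrt (by positivity)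
    set r : Fin 3 → ℝ := c • w with hr
    have hrr : r ⬝ᵥ r = 1 := by
      rw [hr, dotProduct_smul, smul_dotProduct, smul_eq_mul, smul_eq_mul, ← mul_assoc,
        ← sq, hsq, ← hWdef]
      exact inv_mul_cancel₀ hW.ne'
    set u : Fin 3 → ℝ := Λ.mulVec r with hu
    have h1 := hcontr r hrr.le
    have h2 := hcontr (-r) (by rw [neg_dotProduct, dotProduct_neg, neg_neg, hrr])
    rw [← hu] at h1
    rw [mulVec_neg, ← hu] at h2
    have e1 : (u + t) ⬝ᵥ (u + t) = u ⬝ᵥ u + 2 * (t ⬝ᵥ u) + t ⬝ᵥ t := by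
      simp [add_dotProduct, dotProduct_add, dotProduct_comm t u]; ring
    have e2 : (-u + t) ⬝ᵥ (-u + t) = u ⬝ᵥ u - 2 * (t ⬝ᵥ u) + t ⬝ᵥ t := by
      simp [add_dotProduct, dotProduct_add, neg_dotProduct, dotProduct_neg,
        dotProduct_comm t u]; ring
    have huu : u ⬝ᵥ u ≤ 1 - t ⬝ᵥ t := by
      rw [e1] at h1; rw [e2] at h2; linarith
    have hxu : x ⬝ᵥ u = c * W := by
      rw [hu, hr, mulVec_smul, dotProduct_smul, smul_eq_mul, hxw, ← hWdef]
    have hCS := cs_dot x u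
    rw [hxu, mul_pow, hsq] at hCS
    have hW2 : W⁻¹ * W ^ 2 = W := by
      rw [sq, ← mul_assoc, inv_mul_cancel₀ hW.ne', one_mul]
    rw [hW2] at hCS
    have hxx : 0 ≤ x ⬝ᵥ x := dot_nonneg' x
    calc x ⬝ᵥ (Λ * Λᵀ).mulVec x = W := hAx
      _ ≤ (x ⬝ᵥ x) * (u ⬝ᵥ u) := hCS
      _ ≤ (x ⬝ᵥ x) * (1 - t ⬝ᵥ t) := mul_le_mul_of_nonneg_left huu hxx
      _ = (1 - t ⬝ᵥ t) * (x ⬝ᵥ x) := mul_comm _ _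

set_option maxHeartbeats 1000000

/-- If the singular values of `Λ` are all at most 1 and the affine map
`r ↦ Λr + t` maps the closed unit ball into itself, and if the sum of the two
smallest eigenvalues of `M = (ΛΛᵀ + 5ttᵀ)/2` equals 1, then `t = 0` and
`ΛΛᵀ = I₃` (the channel is unitary). -/
theorem stmt6 (Λ : Matrix (Fin 3) (Fin 3) ℝ) (t : Fin 3 → ℝ)
    (hsing : ∀ x : Fin 3 → ℝ, x ⬝ᵥ (Λ * Λᵀ).mulVec x ≤ x ⬝ᵥ x)
    (hcontr : ∀ r : Fin 3 → ℝ, r ⬝ᵥ r ≤ 1 →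
      (Λ.mulVec r + t) ⬝ᵥ (Λ.mulVec r + t) ≤ 1)
    (μ : Fin 3 → ℝ)
    (hμ : EigOrdered ((1/2 : ℝ) • (Λ * Λᵀ + (5 : ℝ) • vecMulVec t t)) μ)
    (h1 : μ 1 + μ 2 = 1) :
    t = 0 ∧ Λ * Λᵀ = 1 := by
  set M2 : Matrix (Fin 3) (Fin 3) ℝ := (1/2 : ℝ) • (Λ * Λᵀ + (5 : ℝ) • vecMulVec t t)
    with hM2def
  obtain ⟨⟨O, hO, hM⟩, h01, h12⟩ := hμ
  have hOO : O * Oᵀ = 1 := mul_eq_one_comm.mp hO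
  set T : ℝ := t ⬝ᵥ t with hTdef
  have hKA := keyA Λ t hcontr
  have rowOrtho : ∀ i j, O i ⬝ᵥ O j = (1 : Matrix (Fin 3) (Fin 3) ℝ) i j := by
    intro i j
    have := congrFun (congrFun hOO i) j
    simpa [mul_apply, dotProduct] using this
  have rowMv : ∀ j, M2.mulVec (O j) = μ j • O j := by
    have hMO : M2 * Oᵀ = Oᵀ * diagonal μ := by
      rw [hM, mul_assoc (Oᵀ * diagonal μ) O Oᵀ, hOO, mul_one]
    intro j
    funext k
    have h1 : M2.mulVec (O j) k = (M2 * Oᵀ) k j := by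
      simp [mulVec, dotProduct, mul_apply, transpose_apply]
    rw [h1, hMO, mul_diagonal]
    simp [transpose_apply, mul_comm]
  have qf : ∀ x : Fin 3 → ℝ,
      x ⬝ᵥ M2.mulVec x = (x ⬝ᵥ (Λ * Λᵀ).mulVec x + 5 * (t ⬝ᵥ x) ^ 2) / 2 := by
    intro x
    have hv : (vecMulVec t t).mulVec x = (t ⬝ᵥ x) • t := by
      funext i
      simp only [mulVec, dotProduct, vecMulVec_apply, Pi.smul_apply, smul_eq_mul,
        Finset.sum_mul]
      exact Finset.sum_congr rfl fun j _ => by ring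
    rw [hM2def]
    rw [smul_mulVec, add_mulVec, smul_mulVec, hv]
    simp [dotProduct_add, dotProduct_smul, smul_eq_mul, dotProduct_comm t x]
    ring
  have pairb : ∀ i j : Fin 3, i ≠ j → μ j ≤ μ i → μ j ≤ (1 - T) / 2 := by
    intro i j hij hle
    set p : ℝ := t ⬝ᵥ O i with hp
    set q : ℝ := t ⬝ᵥ O j with hq
    have hOii : O i ⬝ᵥ O i = 1 := by rw [rowOrtho]; simp
    have hOjj : O j ⬝ᵥ O j = 1 := by rw [rowOrtho]; simp
    have hOij : O i ⬝ᵥ O j = 0 := by rw [rowOrtho]; simp [one_apply, hij]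
    have hOji : O j ⬝ᵥ O i = 0 := by rw [rowOrtho]; simp [one_apply, hij.symm]
    rcases eq_or_lt_of_le (by positivity : (0:ℝ) ≤ q ^ 2 + p ^ 2) with hc | hc
    · -- both p and q vanish; use x = O j
      have hq0 : q = 0 := by nlinarith [sq_nonneg p, sq_nonneg q]
      have := qf (O j)
      rw [rowMv j, dotProduct_smul, hOjj, smul_eq_mul, mul_one, ← hq, hq0] at this
      have hA := hKA (O j)
      rw [hOjj, mul_one] at hA
      rw [this]
      nlinarith
    · set x : Fin 3 → ℝ := q • O i + (-p) • O j with hx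
      have xx : x ⬝ᵥ x = q ^ 2 + p ^ 2 := by
        rw [hx]
        simp [add_dotProduct, dotProduct_add, smul_dotProduct, dotProduct_smul,
          hOii, hOjj, hOij, hOji, smul_eq_mul]
        ring
      have tx : t ⬝ᵥ x = 0 := by
        rw [hx]
        simp [dotProduct_add, dotProduct_smul, ← hp, ← hq, smul_eq_mul]
        ring
      have xMx : x ⬝ᵥ M2.mulVec x = q ^ 2 * μ i + p ^ 2 * μ j := by
        rw [hx, mulVec_add, mulVec_smul, mulVec_smul, rowMv i, rowMv j]
        simp [add_dotProduct, dotProduct_add, smul_dotProduct, dotProduct_smul,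
          hOii, hOjj, hOij, hOji, smul_eq_mul]
        ring
      have hA := hKA x
      rw [xx] at hA
      have := qf x
      rw [xMx, tx] at this
      have hkey : q ^ 2 * μ i + p ^ 2 * μ j ≤ (1 - T) * (q ^ 2 + p ^ 2) / 2 := by
        rw [this]; nlinarith
      have hlow : μ j * (q ^ 2 + p ^ 2) ≤ q ^ 2 * μ i + p ^ 2 * μ j := by
        nlinarith [sq_nonneg q]
      nlinarith
  have hμ1 : μ 1 ≤ (1 - T) / 2 := pairb 0 1 (by decide) h01
  have hμ2 : μ 2 ≤ (1 - T) / 2 := pairb 1 2 (by decide) h12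
  have hT0 : 0 ≤ T := dot_nonneg' t
  have hTz : T = 0 := by linarith
  have ht : t = 0 := dotProduct_self_eq_zero.mp hTz
  have hμ1e : μ 1 = 1/2 := by linarith
  have hμ2e : μ 2 = 1/2 := by linarith
  have hμ0e : μ 0 = 1/2 := by
    have hO00 : O 0 ⬝ᵥ O 0 = 1 := by rw [rowOrtho]; simp
    have := qf (O 0)
    rw [rowMv 0, dotProduct_smul, hO00, smul_eq_mul, mul_one, ht] at this
    simp only [zero_dotProduct] at this
    have hs := hsing (O 0)
    rw [hO00] at hs
    have : μ 0 ≤ 1/2 := by rw [this]; nlinarith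
    linarith
  have hμall : μ = fun _ => (1/2 : ℝ) := by
    funext i
    fin_cases i
    · exact hμ0e
    · exact hμ1e
    · exact hμ2e
  have hdiag : diagonal μ = (1/2 : ℝ) • (1 : Matrix (Fin 3) (Fin 3) ℝ) := by
    rw [hμall]
    ext i j
    by_cases h : i = j <;> simp [diagonal, one_apply, h]
  have hM2one : M2 = (1/2 : ℝ) • (1 : Matrix (Fin 3) (Fin 3) ℝ) := by
    rw [hM, hdiag, Matrix.mul_smul, Matrix.smul_mul, mul_one, hO]
  refine ⟨ht, ?_⟩
  have hvv : vecMulVec t t = 0 := by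
    rw [ht]
    ext i j
    simp [vecMulVec_apply]
  rw [hM2def, hvv, smul_zero, add_zero] at hM2one
  have := congrArg (fun B => (2 : ℝ) • B) hM2one
  simpa [smul_smul] using this
end

section
/- Let N = (ΛΛᵀ + t tᵀ)/2 and M = (ΛΛᵀ + 5 t tᵀ)/2 for a 3×3 real matrix Λ and t ∈ ℝ³. Then the sum of the two smallest eigenvalues of N equals the sum of the two smallest eigenvalues of M if t = 0, or if t is an eigenvector of N corresponding to its largest eigenvalue. -/
open Matrix

lemma eig_trace {A : Matrix (Fin 3) (Fin 3) ℝ} {μ : Fin 3 → ℝ} (h : EigOrdered A μ) :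
    A.trace = μ 0 + μ 1 + μ 2 := by
  obtain ⟨⟨O, hO, hA⟩, -⟩ := h
  have hO' : O * Oᵀ = 1 := mul_eq_one_comm.mp hO
  rw [hA, Matrix.trace_mul_cycle, hO', Matrix.one_mul,
    Matrix.trace_diagonal, Fin.sum_univ_three]

lemma eig_rayleigh {A : Matrix (Fin 3) (Fin 3) ℝ} {μ : Fin 3 → ℝ} (h : EigOrdered A μ)
    (x : Fin 3 → ℝ) : x ⬝ᵥ A *ᵥ x ≤ μ 0 * (x ⬝ᵥ x) := by
  obtain ⟨⟨O, hO, hA⟩, h10, h21⟩ := h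
  set y := O *ᵥ x with hy
  have key : x ⬝ᵥ A *ᵥ x = y ⬝ᵥ (Matrix.diagonal μ) *ᵥ y := by
    rw [hA, ← Matrix.mulVec_mulVec, ← Matrix.mulVec_mulVec,
      Matrix.dotProduct_mulVec x Oᵀ, Matrix.vecMul_transpose, ← hy]
  have hx : x ⬝ᵥ x = y ⬝ᵥ y := by
    have : x ⬝ᵥ x = x ⬝ᵥ ((Oᵀ * O) *ᵥ x) := by rw [hO, Matrix.one_mulVec]
    rw [this, ← Matrix.mulVec_mulVec, Matrix.dotProduct_mulVec x Oᵀ,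
      Matrix.vecMul_transpose, ← hy]
  rw [key, hx]
  simp only [dotProduct, Matrix.mulVec, Matrix.diagonal, Fin.sum_univ_three,
    Matrix.of_apply, Fin.isValue]
  simp [dotProduct, Fin.sum_univ_three]
  nlinarith [sq_nonneg (y 0), sq_nonneg (y 1), sq_nonneg (y 2)]

lemma eig_vec {A : Matrix (Fin 3) (Fin 3) ℝ} {μ : Fin 3 → ℝ} (h : EigOrdered A μ) :
    ∃ u : Fin 3 → ℝ, u ⬝ᵥ u = 1 ∧ A *ᵥ u = μ 0 • u := by
  obtain ⟨⟨O, hO, hA⟩, -⟩ := h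
  have hO' : O * Oᵀ = 1 := mul_eq_one_comm.mp hO
  set e : Fin 3 → ℝ := Pi.single 0 1 with he
  refine ⟨Oᵀ *ᵥ e, ?_, ?_⟩
  · rw [dotProduct_comm, Matrix.dotProduct_mulVec, Matrix.vecMul_transpose,
      Matrix.mulVec_mulVec, hO', Matrix.one_mulVec]
    simp [he, dotProduct, Pi.single_apply, Fin.sum_univ_three]
  · have hde : (Matrix.diagonal μ) *ᵥ e = μ 0 • e := by
      funext i
      simp [Matrix.mulVec_diagonal, he, Pi.single_apply]
      rcases i with ⟨i, hi⟩
      interval_cases i <;> simp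
    have h1 : O *ᵥ (Oᵀ *ᵥ e) = e := by
      rw [Matrix.mulVec_mulVec, hO', Matrix.one_mulVec]
    rw [hA, Matrix.mul_assoc, ← Matrix.mulVec_mulVec, ← Matrix.mulVec_mulVec, h1,
      hde, Matrix.mulVec_smul]

lemma cs3 (a b : Fin 3 → ℝ) : (a ⬝ᵥ b)^2 ≤ (a ⬝ᵥ a) * (b ⬝ᵥ b) := by
  simp only [dotProduct, Fin.sum_univ_three]
  nlinarith [sq_nonneg (a 0 * b 1 - a 1 * b 0), sq_nonneg (a 0 * b 2 - a 2 * b 0),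
    sq_nonneg (a 1 * b 2 - a 2 * b 1)]

lemma vmv_mulVec (t x : Fin 3 → ℝ) : (vecMulVec t t) *ᵥ x = (t ⬝ᵥ x) • t := by
  funext i
  simp [Matrix.vecMulVec, Matrix.mulVec, dotProduct, Fin.sum_univ_three]
  ring

lemma vmv_trace (t : Fin 3 → ℝ) : (vecMulVec t t).trace = t ⬝ᵥ t := by
  simp [Matrix.trace, Matrix.vecMulVec, Matrix.diag, dotProduct, Fin.sum_univ_three]

lemma smul_pos_le {a b s : ℝ} (hs : 0 < s) (h : a * s ≤ b * s) : a ≤ b :=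
  le_of_mul_le_mul_right h hs

/-- For `N = (ΛΛᵀ + ttᵀ)/2` and `M = (ΛΛᵀ + 5ttᵀ)/2`, the sums of the two
smallest eigenvalues of `N` and `M` coincide if `t = 0` or if `t` is an
eigenvector of `N` for its largest eigenvalue. -/
theorem stmt9 (Λ : Matrix (Fin 3) (Fin 3) ℝ) (t : Fin 3 → ℝ)
    (N M : Matrix (Fin 3) (Fin 3) ℝ)
    (hNdef : N = (1/2 : ℝ) • (Λ * Λᵀ + vecMulVec t t))
    (hMdef : M = (1/2 : ℝ) • (Λ * Λᵀ + (5 : ℝ) • vecMulVec t t))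
    (ν μ : Fin 3 → ℝ) (hν : EigOrdered N ν) (hμ : EigOrdered M μ)
    (h : t = 0 ∨ (t ≠ 0 ∧ N.mulVec t = ν 0 • t)) :
    ν 1 + ν 2 = μ 1 + μ 2 := by
  set S : ℝ := t ⬝ᵥ t with hS
  have hM2 : M = N + (2 : ℝ) • vecMulVec t t := by
    rw [hNdef, hMdef]
    ext i j
    simp [Matrix.add_apply, Matrix.smul_apply]
    ring
  have htrN := eig_trace hν
  have htrM := eig_trace hμ
  have htr : M.trace = N.trace + 2 * S := by
    rw [hM2, Matrix.trace_add, Matrix.trace_smul, vmv_trace, smul_eq_mul, hS]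
  -- quadratic form of M
  have hqM : ∀ x : Fin 3 → ℝ, x ⬝ᵥ M *ᵥ x = x ⬝ᵥ N *ᵥ x + 2 * (t ⬝ᵥ x) ^ 2 := by
    intro x
    rw [hM2, Matrix.add_mulVec, Matrix.smul_mulVec, vmv_mulVec,
      dotProduct_add, dotProduct_smul, dotProduct_smul,
      dotProduct_comm x t]
    simp only [smul_eq_mul]
    ring
  -- upper bound : μ 0 ≤ ν 0 + 2 S
  obtain ⟨u, hu1, huM⟩ := eig_vec hμ
  have hμ0u : u ⬝ᵥ M *ᵥ u = μ 0 := by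
    rw [huM, dotProduct_smul, hu1, smul_eq_mul, mul_one]
  have hupper : μ 0 ≤ ν 0 + 2 * S := by
    have h1 := eig_rayleigh hν u
    have h2 := cs3 t u
    rw [hu1, mul_one] at h1 h2
    have := hqM u
    rw [hμ0u] at this
    nlinarith [sq_nonneg (t ⬝ᵥ u)]
  -- lower bound : ν 0 + 2 S ≤ μ 0
  have hlower : ν 0 + 2 * S ≤ μ 0 := by
    rcases h with ht0 | ⟨htne, htev⟩
    · -- t = 0 : M = N, S = 0
      have hS0 : S = 0 := by simp [hS, ht0]
      have hMN : M = N := by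
        rw [hM2, ht0]
        ext i j
        simp [Matrix.vecMulVec]
      obtain ⟨v, hv1, hvN⟩ := eig_vec hν
      have hν0v : v ⬝ᵥ N *ᵥ v = ν 0 := by
        rw [hvN, dotProduct_smul, hv1, smul_eq_mul, mul_one]
      have h1 := eig_rayleigh hμ v
      rw [hv1, mul_one, hMN, hν0v] at h1
      rw [hS0]
      linarith
    · -- t ≠ 0 : use Rayleigh at t
      have hSpos : 0 < S := by
        have hnn : (0:ℝ) ≤ S := by
          simp only [hS, dotProduct, Fin.sum_univ_three]
          nlinarith [sq_nonneg (t 0), sq_nonneg (t 1), sq_nonneg (t 2)]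
        rcases lt_or_eq_of_le hnn with h' | h'
        · exact h'
        · exact absurd ((dotProduct_self_eq_zero).mp (hS ▸ h'.symm)) htne
      have h1 := eig_rayleigh hμ t
      have h2 := hqM t
      have h3 : t ⬝ᵥ N *ᵥ t = ν 0 * S := by
        rw [htev, dotProduct_smul, smul_eq_mul, hS]
      rw [h2, h3, ← hS] at h1
      have : (ν 0 + 2 * S) * S ≤ μ 0 * S := by nlinarith
      exact smul_pos_le hSpos this
  have hμ0 : μ 0 = ν 0 + 2 * S := le_antisymm hupper hlower
  linarith
end

section
/- Let Λ = diag(λ₁, λ₂, λ₃) with ∑ᵢ |λᵢ| ≤ 1 and t ∈ ℝ³, and suppose the singular values of Λ are at most 1. Then the sum of the two smallest eigenvalues of M = (ΛΛᵀ + 5ttᵀ)/2 is at most (1 − n̂ᵀΛΛᵀn̂ − ∑_{i≠j}|λᵢλⱼ|)/2 for any unit vector n̂ parallel to t, and hence is at most 1/2. -/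
open Matrix

/-- For a diagonal `Λ = diag(λ)` with `∑ᵢ|λᵢ| ≤ 1` (entanglement breaking) and
singular values at most 1, the sum of the two smallest eigenvalues of
`M = (ΛΛᵀ + 5ttᵀ)/2` is bounded by `(1 − n̂ᵀΛΛᵀn̂ − ∑_{i≠j}|λᵢλⱼ|)/2` for any
unit `n̂` parallel to `t`, hence by `1/2`. -/
theorem stmt10 (l : Fin 3 → ℝ) (t : Fin 3 → ℝ)
    (Λ : Matrix (Fin 3) (Fin 3) ℝ) (hΛ : Λ = Matrix.diagonal l)
    (hsum : ∑ i, |l i| ≤ 1) (hsing : ∀ i, |l i| ≤ 1)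
    (μ : Fin 3 → ℝ)
    (hμ : EigOrdered ((1/2 : ℝ) • (Λ * Λᵀ + (5 : ℝ) • vecMulVec t t)) μ) :
    (∀ n : Fin 3 → ℝ, n ⬝ᵥ n = 1 → (∃ c : ℝ, t = c • n) →
      μ 1 + μ 2 ≤
        (1 - n ⬝ᵥ (Λ * Λᵀ).mulVec n - ∑ i, ∑ j, if i ≠ j then |l i * l j| else 0) / 2)
    ∧ μ 1 + μ 2 ≤ 1/2 := by
  subst hΛ
  obtain ⟨⟨O, hO, hM⟩, h10, h21⟩ := hμ
  -- trace identity
  have htr : ((1/2 : ℝ) • (Matrix.diagonal l * (Matrix.diagonal l)ᵀ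
      + (5 : ℝ) • vecMulVec t t)).trace = μ 0 + μ 1 + μ 2 := by
    rw [hM, Matrix.trace_mul_cycle, mul_eq_one_comm.mp hO, Matrix.one_mul,
      Matrix.trace_diagonal, Fin.sum_univ_three]
  have htrval : ((1/2 : ℝ) • (Matrix.diagonal l * (Matrix.diagonal l)ᵀ
      + (5 : ℝ) • vecMulVec t t)).trace
      = (l 0^2 + l 1^2 + l 2^2 + 5*(t 0^2 + t 1^2 + t 2^2))/2 := by
    simp [Matrix.trace_fin_three, Matrix.mul_apply, Matrix.vecMulVec_apply,
      Fin.sum_univ_three, Matrix.diagonal, dotProduct]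
    ring
  -- Rayleigh bound
  have hray : ∀ n : Fin 3 → ℝ, n ⬝ᵥ n = 1 →
      n ⬝ᵥ ((1/2 : ℝ) • (Matrix.diagonal l * (Matrix.diagonal l)ᵀ
        + (5 : ℝ) • vecMulVec t t)).mulVec n ≤ μ 0 := by
    intro n hn
    have hmm : (O *ᵥ n) ⬝ᵥ (O *ᵥ n) = 1 := by
      rw [Matrix.dotProduct_mulVec, ← Matrix.vecMul_transpose, Matrix.vecMul_vecMul,
        hO, Matrix.vecMul_one, hn]
    have hmm' : (O *ᵥ n) 0 * (O *ᵥ n) 0 + (O *ᵥ n) 1 * (O *ᵥ n) 1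
        + (O *ᵥ n) 2 * (O *ᵥ n) 2 = 1 := by
      simpa [dotProduct, Fin.sum_univ_three] using hmm
    have hquad : n ⬝ᵥ ((1/2 : ℝ) • (Matrix.diagonal l * (Matrix.diagonal l)ᵀ
        + (5 : ℝ) • vecMulVec t t)).mulVec n
        = μ 0 * ((O *ᵥ n) 0 * (O *ᵥ n) 0) + μ 1 * ((O *ᵥ n) 1 * (O *ᵥ n) 1)
          + μ 2 * ((O *ᵥ n) 2 * (O *ᵥ n) 2) := by
      rw [hM, Matrix.mul_assoc, ← Matrix.mulVec_mulVec, Matrix.dotProduct_mulVec,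
        Matrix.vecMul_transpose, ← Matrix.mulVec_mulVec]
      simp [dotProduct, Matrix.mulVec_diagonal, Fin.sum_univ_three]
      ring
    rw [hquad]
    nlinarith [mul_self_nonneg ((O *ᵥ n) 1), mul_self_nonneg ((O *ᵥ n) 2)]
  -- explicit quadratic forms
  have hqM : ∀ n : Fin 3 → ℝ,
      n ⬝ᵥ ((1/2 : ℝ) • (Matrix.diagonal l * (Matrix.diagonal l)ᵀ
        + (5 : ℝ) • vecMulVec t t)).mulVec n
      = (l 0^2*n 0^2 + l 1^2*n 1^2 + l 2^2*n 2^2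
          + 5*(t 0*n 0 + t 1*n 1 + t 2*n 2)^2)/2 := by
    intro n
    simp [dotProduct, Matrix.mulVec, Matrix.vecMulVec_apply, Matrix.mul_apply,
      Fin.sum_univ_three, Matrix.diagonal]
    ring
  have hqL : ∀ n : Fin 3 → ℝ, n ⬝ᵥ (Matrix.diagonal l * (Matrix.diagonal l)ᵀ).mulVec n
      = l 0^2*n 0^2 + l 1^2*n 1^2 + l 2^2*n 2^2 := by
    intro n
    simp [dotProduct, Matrix.mulVec, Matrix.mul_apply, Fin.sum_univ_three, Matrix.diagonal]
    ring
  have hS : (∑ i, ∑ j, if i ≠ j then |l i * l j| else 0)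
      = 2*(|l 0| * |l 1| + |l 0| * |l 2| + |l 1| * |l 2|) := by
    simp [Fin.sum_univ_three, abs_mul]
    ring
  have hsum3 : |l 0| + |l 1| + |l 2| ≤ 1 := by
    simpa [Fin.sum_univ_three] using hsum
  have hLS : l 0^2 + l 1^2 + l 2^2
      + 2*(|l 0| * |l 1| + |l 0| * |l 2| + |l 1| * |l 2|) ≤ 1 := by
    have h1 : (|l 0| + |l 1| + |l 2|)^2 ≤ 1 := by
      nlinarith [hsum3, abs_nonneg (l 0), abs_nonneg (l 1), abs_nonneg (l 2)]
    have h2 : l 0^2 + l 1^2 + l 2^2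
        + 2*(|l 0| * |l 1| + |l 0| * |l 2| + |l 1| * |l 2|)
        = (|l 0| + |l 1| + |l 2|)^2 := by
      rw [← sq_abs (l 0), ← sq_abs (l 1), ← sq_abs (l 2)]; ring
    linarith
  -- part 1
  have part1 : ∀ n : Fin 3 → ℝ, n ⬝ᵥ n = 1 → (∃ c : ℝ, t = c • n) →
      μ 1 + μ 2 ≤
        (1 - n ⬝ᵥ (Matrix.diagonal l * (Matrix.diagonal l)ᵀ).mulVec n
          - ∑ i, ∑ j, if i ≠ j then |l i * l j| else 0) / 2 := by
    rintro n hn ⟨c, hc⟩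
    have hn' : n 0 * n 0 + n 1 * n 1 + n 2 * n 2 = 1 := by
      simpa [dotProduct, Fin.sum_univ_three] using hn
    have hn3 : n 0 ^ 2 + n 1 ^ 2 + n 2 ^ 2 = 1 := by linear_combination hn'
    have ht0 : t 0 = c * n 0 := by rw [hc]; rfl
    have ht1 : t 1 = c * n 1 := by rw [hc]; rfl
    have ht2 : t 2 = c * n 2 := by rw [hc]; rfl
    have hup := hray n hn
    rw [hqM n] at hup
    have hd : t 0 * n 0 + t 1 * n 1 + t 2 * n 2 = c := by
      rw [ht0, ht1, ht2]; linear_combination c * hn3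
    rw [hd] at hup
    have he : t 0 ^ 2 + t 1 ^ 2 + t 2 ^ 2 = c ^ 2 := by
      rw [ht0, ht1, ht2]; linear_combination c^2 * hn3
    have hμ12 : μ 1 + μ 2
        = (l 0^2 + l 1^2 + l 2^2 + 5*(t 0^2 + t 1^2 + t 2^2))/2 - μ 0 := by
      rw [← htrval]; linarith [htr]
    rw [hμ12, he, hqL n, hS]
    linarith [hup, hLS]
  refine ⟨part1, ?_⟩
  -- part 2
  have hQnonneg : ∀ n : Fin 3 → ℝ,
      0 ≤ n ⬝ᵥ (Matrix.diagonal l * (Matrix.diagonal l)ᵀ).mulVec n := by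
    intro n
    rw [hqL n]
    positivity
  by_cases ht : t = 0
  · have hb := part1 ![1, 0, 0] (by simp [dotProduct, Fin.sum_univ_three])
      ⟨0, by simp [ht]⟩
    have hq := hQnonneg ![1, 0, 0]
    have hs0 : 0 ≤ 2*(|l 0| * |l 1| + |l 0| * |l 2| + |l 1| * |l 2|) := by positivity
    rw [hS] at hb
    linarith
  · have htt0 : (0:ℝ) ≤ t ⬝ᵥ t := by
      simp only [dotProduct, Fin.sum_univ_three]
      nlinarith [mul_self_nonneg (t 0), mul_self_nonneg (t 1), mul_self_nonneg (t 2)]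
    have httpos : (0:ℝ) < t ⬝ᵥ t :=
      lt_of_le_of_ne htt0 (Ne.symm (mt dotProduct_self_eq_zero.mp ht))
    set s := Real.sqrt (t ⬝ᵥ t) with hsdef
    have hspos : 0 < s := Real.sqrt_pos.mpr httpos
    have hss : s * s = t ⬝ᵥ t := Real.mul_self_sqrt httpos.le
    set n : Fin 3 → ℝ := s⁻¹ • t with hndef
    have hnn : n ⬝ᵥ n = 1 := by
      rw [hndef, smul_dotProduct, dotProduct_smul, smul_eq_mul,
        smul_eq_mul, ← hss]
      field_simp
    have hb := part1 n hnn ⟨s, by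
      rw [hndef, smul_smul, mul_inv_cancel₀ hspos.ne', one_smul]⟩
    have hq := hQnonneg n
    have hs0 : 0 ≤ 2*(|l 0| * |l 1| + |l 0| * |l 2| + |l 1| * |l 2|) := by positivity
    rw [hS] at hb
    linarith
end

section
/- Let ℰ act on a qubit by ℰ(ρ) = ∑_{i=0}^{3} pᵢ σᵢ ρ σᵢ with pᵢ ≥ 0, ∑pᵢ = 1, and p₀ ≥ p₁ ≥ p₂ ≥ p₃ (generalized depolarizing channel). Its affine matrix is Λ = diag(λ₁, λ₂, λ₃) with λ₁ = p₀+p₁−p₂−p₃, λ₂ = p₀−p₁+p₂−p₃, λ₃ = p₀−p₁−p₂+p₃ and t = 0, and its quantumness is Q(ℰ) = (λ₂² + λ₃²)/2 = (p₀ − p₁)² + (p₂ − p₃)². -/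
open Matrix Complex

noncomputable def pauli4 : Fin 4 → Matrix (Fin 2) (Fin 2) ℂ :=
  ![1, !![0, 1; 1, 0], !![0, -I; I, 0], !![1, 0; 0, -1]]

set_option maxHeartbeats 2000000 in
/-- The generalized depolarizing channel `ρ ↦ ∑ pᵢ σᵢ ρ σᵢ` (with
`p₀ ≥ p₁ ≥ p₂ ≥ p₃`) has affine representation `Λ = diag(λ₁,λ₂,λ₃)`, `t = 0`,
and quantumness `(λ₂² + λ₃²)/2 = (p₀ − p₁)² + (p₂ − p₃)²`. -/
theorem stmt13 (p : Fin 4 → ℝ) (hp : ∀ i, 0 ≤ p i) (hsum : ∑ i, p i = 1)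
    (h01 : p 1 ≤ p 0) (h12 : p 2 ≤ p 1) (h23 : p 3 ≤ p 2)
    (E : Matrix (Fin 2) (Fin 2) ℂ → Matrix (Fin 2) (Fin 2) ℂ)
    (hE : ∀ ρ, E ρ = ∑ i, (p i : ℂ) • (pauli4 i * ρ * pauli4 i))
    (lam : Fin 3 → ℝ)
    (hlam : lam = ![p 0 + p 1 - p 2 - p 3, p 0 - p 1 + p 2 - p 3, p 0 - p 1 - p 2 + p 3]) :
    (∀ r : Fin 3 → ℝ,
      E ((1/2 : ℂ) • (1 + ∑ i : Fin 3, (r i : ℂ) • pauli4 i.succ))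
        = (1/2 : ℂ) • (1 + ∑ i : Fin 3, ((lam i * r i : ℝ) : ℂ) • pauli4 i.succ))
    ∧ EigOrdered ((1/2 : ℝ) • ((Matrix.diagonal lam) * (Matrix.diagonal lam)ᵀ))
        (fun i => lam i ^ 2 / 2)
    ∧ (lam 1 ^ 2 + lam 2 ^ 2) / 2 = (p 0 - p 1)^2 + (p 2 - p 3)^2 := by
  have hsum' : (p 0 : ℂ) + p 1 + p 2 + p 3 = 1 := by
    have := hsum; rw [Fin.sum_univ_four] at this
    exact_mod_cast this
  have e0 : lam 0 = p 0 + p 1 - p 2 - p 3 := by rw [hlam]; rfl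
  have e1 : lam 1 = p 0 - p 1 + p 2 - p 3 := by rw [hlam]; rfl
  have e2 : lam 2 = p 0 - p 1 - p 2 + p 3 := by rw [hlam]; rfl
  refine ⟨?_, ⟨⟨1, by simp, ?_⟩, ?_, ?_⟩, ?_⟩
  · intro r
    rw [hE, hlam]
    ext i j
    fin_cases i <;> fin_cases j <;>
      simp [pauli4, Fin.sum_univ_four, Fin.sum_univ_three, Matrix.mul_apply,
        Matrix.one_apply, Fin.sum_univ_two, Matrix.vecMul, Matrix.vecHead, Matrix.vecTail,
        dotProduct] <;>
      rw [show (p 0:ℂ) = 1 - p 1 - p 2 - p 3 from by linear_combination hsum'] <;> ring_nf <;>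
      (try simp only [Complex.I_sq, show (I:ℂ)^3 = -I from by rw [pow_succ, Complex.I_sq]; ring]) <;>
      ring
  · rw [Matrix.transpose_one, Matrix.one_mul, Matrix.mul_one, Matrix.diagonal_transpose,
      Matrix.diagonal_mul_diagonal]
    ext i j
    rcases eq_or_ne i j with h | h
    · subst h; simp [Matrix.diagonal]; ring
    · simp [Matrix.diagonal_apply_ne _ h]
  · simp only [e0, e1]; nlinarith
  · simp only [e1, e2]; nlinarith
  · rw [e1, e2]; ring
end

section
/- Let q₁, q₂, q₁′, q₂′ ≥ 0 with q₁ + q₂ ≤ 1 and q₁′ + q₂′ ≤ 1, and let r₃ ∈ [−1, 1]. Then ∑_{i=1}^{2} 2qᵢqᵢ′ / (qᵢ(1 + r₃) + qᵢ′(1 − r₃)) ≤ 1, where each summand with zero denominator is interpreted as 0. Equality holds when q₁ = q₁′ = 1 − q₂ = 1 − q₂′. -/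
private lemma key16 (a b r : ℝ) (ha : 0 ≤ a) (hb : 0 ≤ b)
    (h1 : 0 ≤ 1 + r) (h2 : 0 ≤ 1 - r) :
    2*a*b / (a*(1 + r) + b*(1 - r)) ≤ (a*(1 - r) + b*(1 + r))/2 := by
  set d := a*(1 + r) + b*(1 - r) with hd
  have hd0 : 0 ≤ d := by positivity
  rcases eq_or_lt_of_le hd0 with h | h
  · rw [← h, div_zero]
    positivity
  · rw [div_le_iff₀ h]
    nlinarith [mul_nonneg (mul_nonneg h1 h2) (sq_nonneg (a - b))]

/-- The weight factor in the strong-monotonicity proof of the squared l₁-norm of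
coherence is at most 1, with equality when `q₁ = q₁′ = 1 − q₂ = 1 − q₂′`.
(Summands with zero denominator are 0, which is Lean's convention for `x/0`.) -/
theorem stmt16 (q1 q2 q1' q2' r3 : ℝ)
    (hq1 : 0 ≤ q1) (hq2 : 0 ≤ q2) (hq1' : 0 ≤ q1') (hq2' : 0 ≤ q2')
    (hs : q1 + q2 ≤ 1) (hs' : q1' + q2' ≤ 1) (hr : r3 ∈ Set.Icc (-1 : ℝ) 1) :
    2*q1*q1' / (q1*(1 + r3) + q1'*(1 - r3))
      + 2*q2*q2' / (q2*(1 + r3) + q2'*(1 - r3)) ≤ 1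
    ∧ (q1 = q1' → q1 = 1 - q2 → q1 = 1 - q2' →
        2*q1*q1' / (q1*(1 + r3) + q1'*(1 - r3))
          + 2*q2*q2' / (q2*(1 + r3) + q2'*(1 - r3)) = 1) := by
  obtain ⟨hr1, hr2⟩ := hr
  have h1 : 0 ≤ 1 + r3 := by linarith
  have h2 : 0 ≤ 1 - r3 := by linarith
  constructor
  · have k1 := key16 q1 q1' r3 hq1 hq1' h1 h2
    have k2 := key16 q2 q2' r3 hq2 hq2' h1 h2
    nlinarith
  · intro e1 e2 e3
    subst e1
    have hq2e : q2 = 1 - q1 := by linarith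
    have hq2e' : q2' = 1 - q1 := by linarith
    subst hq2e; subst hq2e'
    rcases eq_or_lt_of_le hq1 with h0 | h0
    · rw [← h0]
      have : (1 - (0:ℝ))*(1 + r3) + (1 - 0)*(1 - r3) = 2 := by ring
      rw [this]
      norm_num
    · have hq11 : q1 ≤ 1 := by linarith
      rcases eq_or_lt_of_le hq11 with h1' | h1'
      · rw [h1']
        norm_num
      · have d1 : q1*(1 + r3) + q1*(1 - r3) = 2*q1 := by ring
        have d2 : (1 - q1)*(1 + r3) + (1 - q1)*(1 - r3) = 2*(1 - q1) := by ring
        rw [d1, d2]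
        have h1q : (0:ℝ) < 1 - q1 := by linarith
        field_simp
        ring
end

section
/- For the amplitude damping channel with parameter γ ∈ [0,1], whose affine parameters are Λ = diag(√(1−γ), √(1−γ), 1−γ) and t = (0, 0, γ)ᵀ, the quantumness Q(ℰ) (the sum of the two smallest eigenvalues of M = (ΛΛᵀ + 5ttᵀ)/2) equals (6γ² − 3γ + 2)/2 for γ ≤ 1/6 and equals 1 − γ for γ > 1/6. -/
open Matrix

/-- The quantumness of the amplitude damping channel with parameter `γ`:
the sum of the two smallest eigenvalues of `M = (ΛΛᵀ + 5ttᵀ)/2` with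
`Λ = diag(√(1−γ), √(1−γ), 1−γ)`, `t = (0,0,γ)ᵀ` equals
`(6γ² − 3γ + 2)/2` for `γ ≤ 1/6` and `1 − γ` for `γ > 1/6`. -/
theorem stmt18 (γ : ℝ) (hγ : γ ∈ Set.Icc (0 : ℝ) 1)
    (Λ : Matrix (Fin 3) (Fin 3) ℝ) (t : Fin 3 → ℝ)
    (hΛ : Λ = Matrix.diagonal ![Real.sqrt (1-γ), Real.sqrt (1-γ), 1-γ])
    (ht : t = ![0, 0, γ])
    (μ : Fin 3 → ℝ)
    (hμ : EigOrdered ((1/2 : ℝ) • (Λ * Λᵀ + (5 : ℝ) • vecMulVec t t)) μ) :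
    μ 1 + μ 2 = if γ ≤ 1/6 then (6*γ^2 - 3*γ + 2)/2 else 1 - γ := by
  obtain ⟨hγ0, hγ1⟩ := hγ
  set a : ℝ := (1 - γ)/2 with ha
  set b : ℝ := (6*γ^2 - 2*γ + 1)/2 with hb
  have hsq : Real.sqrt (1-γ) ^ 2 = 1 - γ := Real.sq_sqrt (by linarith)
  have hM : (1/2 : ℝ) • (Λ * Λᵀ + (5 : ℝ) • vecMulVec t t)
      = Matrix.diagonal ![a, a, b] := by
    subst hΛ ht
    ext i j
    fin_cases i <;> fin_cases j <;>
      simp [Matrix.mul_apply, Matrix.diagonal, Matrix.vecMulVec_apply,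
        Fin.sum_univ_three, ha, hb] <;> nlinarith [hsq]
  rw [hM] at hμ
  obtain ⟨⟨O, hOO, hD⟩, h10, h21⟩ := hμ
  have hOO' : O * Oᵀ = 1 := mul_eq_one_comm.mp hOO
  -- trace equality
  have htr : a + a + b = μ 0 + μ 1 + μ 2 := by
    have h1 : (Matrix.diagonal ![a, a, b]).trace = (Matrix.diagonal μ).trace := by
      rw [hD, Matrix.trace_mul_cycle, hOO', Matrix.one_mul]
    simpa [Matrix.trace_diagonal, Fin.sum_univ_three] using h1
  -- each eigenvalue is a or b
  have hmem : ∀ j : Fin 3, μ j = a ∨ μ j = b := by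
    intro j
    have hdet : (Matrix.diagonal (fun i => μ i - μ j)).det = 0 := by
      rw [Matrix.det_diagonal]
      exact Finset.prod_eq_zero (Finset.mem_univ j) (by simp)
    have hconj : Matrix.diagonal ![a - μ j, a - μ j, b - μ j]
        = Oᵀ * Matrix.diagonal (fun i => μ i - μ j) * O := by
      have h1 : Matrix.diagonal (fun i => μ i - μ j)
          = Matrix.diagonal μ - (μ j) • (1 : Matrix (Fin 3) (Fin 3) ℝ) := by
        ext i k
        by_cases h : i = k <;>
          simp [Matrix.diagonal, Matrix.one_apply, h, Matrix.smul_apply]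
      have h2 : Matrix.diagonal ![a - μ j, a - μ j, b - μ j]
          = Matrix.diagonal ![a, a, b] - (μ j) • (1 : Matrix (Fin 3) (Fin 3) ℝ) := by
        ext i k
        fin_cases i <;> fin_cases k <;>
          simp [Matrix.diagonal, Matrix.one_apply, Matrix.smul_apply]
      rw [h1, h2, hD, Matrix.mul_sub, Matrix.sub_mul]
      congr 1
      rw [Matrix.mul_smul, Matrix.smul_mul, Matrix.mul_one, hOO]
    have hdet2 : (Matrix.diagonal ![a - μ j, a - μ j, b - μ j]).det = 0 := by
      rw [hconj, Matrix.det_mul, Matrix.det_mul, hdet]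
      ring
    rw [Matrix.det_diagonal, Fin.prod_univ_three] at hdet2
    simp only [Matrix.cons_val_zero, Matrix.cons_val_one, Matrix.head_cons,
      Matrix.cons_val_two, Matrix.tail_cons] at hdet2
    rcases mul_eq_zero.mp hdet2 with h | h
    · rcases mul_eq_zero.mp h with h' | h'
      · left; linarith [sub_eq_zero.mp h']
      · left; linarith [sub_eq_zero.mp h']
    · right; linarith [sub_eq_zero.mp h]
  by_cases hc : γ ≤ 1/6
  · rw [if_pos hc]
    have hba : b ≤ a := by nlinarith
    have hgoal : (6*γ^2 - 3*γ + 2)/2 = a + b := by rw [ha, hb]; ring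
    rw [hgoal]
    rcases hmem 0 with h0 | h0 <;> rcases hmem 1 with h1 | h1 <;>
      rcases hmem 2 with h2 | h2 <;> linarith
  · rw [if_neg hc]
    push_neg at hc
    have hab : a < b := by nlinarith
    have hgoal : 1 - γ = a + a := by rw [ha]; ring
    rw [hgoal]
    rcases hmem 0 with h0 | h0 <;> rcases hmem 1 with h1 | h1 <;>
      rcases hmem 2 with h2 | h2 <;> linarith
end
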